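/- Shearer's inequality for polymatroids: Let H = ([n], E) be a hypergraph and δ = (δ_F)_{F∈E} a vector of nonnegative reals. The inequality h([n]) ≤ ∑_{F∈E} δ_F · h(F) holds for every polymatroid h on [n] if and only if δ is a fractional edge cover of H, i.e., ∑_{F∈E : v∈F} δ_F ≥ 1 for every v ∈ [n]. -/
import Mathlib


open Finset

/-- A polymatroid on `[n]`: a nonnegative set function with `h ∅ = 0` that is
monotone and submodular. -/
def IsPolymatroid {n : ℕ} (h : Finset (Fin n) → ℝ) : Prop :=
  h ∅ = 0 ∧ (∀ S, 0 ≤ h S) ∧ (∀ X Y, X ⊆ Y → h X ≤ h Y) ∧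
    (∀ X Y, h (X ∪ Y) + h (X ∩ Y) ≤ h X + h Y)

/-- Telescoping identity for the increments of `h` along prefixes. -/
lemma telescope_aux {n : ℕ} (h : Finset (Fin n) → ℝ) (h0 : h ∅ = 0)
    (F : Finset (Fin n)) :
    ∑ i : Fin n, (h (F.filter (fun x => x ≤ i)) - h (F.filter (fun x => x < i))) = h F := by
  have key : ∀ i : Fin n,
      (h (F.filter (fun x => x ≤ i)) - h (F.filter (fun x => x < i)))
      = (fun k : ℕ => h (F.filter (fun x : Fin n => (x : ℕ) < k))) (i + 1)
        - (fun k : ℕ => h (F.filter (fun x : Fin n => (x : ℕ) < k))) i := by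
    intro i
    have e1 : F.filter (fun x => x ≤ i) = F.filter (fun x : Fin n => (x : ℕ) < (i : ℕ) + 1) := by
      ext x
      simp only [Finset.mem_filter, Fin.le_def, Nat.lt_succ_iff]
    have e2 : F.filter (fun x => x < i) = F.filter (fun x : Fin n => (x : ℕ) < (i : ℕ)) := by
      ext x
      simp only [Finset.mem_filter, Fin.lt_def]
    rw [e1, e2]
  rw [Finset.sum_congr rfl (fun i _ => key i),
    Fin.sum_univ_eq_sum_range (fun k => (fun k : ℕ => h (F.filter (fun x : Fin n => (x : ℕ) < k))) (k + 1)
      - (fun k : ℕ => h (F.filter (fun x : Fin n => (x : ℕ) < k))) k),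
    Finset.sum_range_sub (fun k : ℕ => h (F.filter (fun x : Fin n => (x : ℕ) < k)))]
  have h1 : F.filter (fun x : Fin n => (x : ℕ) < n) = F := by
    apply Finset.filter_true_of_mem; intro x _; exact x.isLt
  have h2 : F.filter (fun x : Fin n => (x : ℕ) < 0) = ∅ := by
    apply Finset.filter_false_of_mem; intro x _; omega
  simp only [h1, h2, h0, sub_zero]

/-- **Shearer's inequality for polymatroids:** given a hypergraph `([n], E)` and
nonnegative coefficients `δ`, the inequality `h([n]) ≤ ∑_{F ∈ E} δ_F h(F)` holds for
every polymatroid `h` iff `δ` is a fractional edge cover of the hypergraph. -/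
theorem shearer_polymatroid {n : ℕ} (E : Finset (Finset (Fin n)))
    (δ : Finset (Fin n) → ℝ) (hδ : ∀ F ∈ E, 0 ≤ δ F) :
    (∀ h : Finset (Fin n) → ℝ, IsPolymatroid h →
        h Finset.univ ≤ ∑ F ∈ E, δ F * h F)
    ↔ (∀ v : Fin n, 1 ≤ ∑ F ∈ E.filter (fun F => v ∈ F), δ F) := by
  constructor
  · -- Shearer for all polymatroids ⇒ fractional edge cover
    intro H v
    have hp : IsPolymatroid (fun S : Finset (Fin n) => if v ∈ S then (1 : ℝ) else 0) := by
      refine ⟨by simp, fun S => by dsimp only; split_ifs <;> norm_num,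
        fun X Y hXY => ?_, fun X Y => ?_⟩
      · dsimp only
        split_ifs with h1 h2
        · norm_num
        · exact absurd (hXY h1) h2
        · norm_num
        · norm_num
      · dsimp only
        split_ifs <;> simp_all (config := {decide := false}) [Finset.mem_union,
          Finset.mem_inter]
    have key := H _ hp
    simp only [Finset.mem_univ, if_true, mul_ite, mul_one, mul_zero] at key
    rw [Finset.sum_filter]
    exact key
  · -- fractional edge cover ⇒ Shearer
    intro hc h hp
    obtain ⟨h0, hnn, hmono, hsub⟩ := hp
    set c : Fin n → ℝ := fun i =>
      h ((univ : Finset (Fin n)).filter (fun x => x ≤ i))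
        - h ((univ : Finset (Fin n)).filter (fun x => x < i)) with hc'
    have hfsub : ∀ (F : Finset (Fin n)) (i : Fin n),
        F.filter (fun x => x < i) ⊆ F.filter (fun x => x ≤ i) := by
      intro F i x hx
      simp only [Finset.mem_filter] at hx ⊢
      exact ⟨hx.1, le_of_lt hx.2⟩
    have hcnn : ∀ i, 0 ≤ c i := by
      intro i
      have := hmono _ _ (hfsub univ i)
      simp only [hc']; linarith
    have hstep : ∀ F : Finset (Fin n), ∀ i : Fin n, i ∈ F →
        c i ≤ h (F.filter (fun x => x ≤ i)) - h (F.filter (fun x => x < i)) := by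
      intro F i hiF
      have hsub' := hsub (F.filter (fun x => x ≤ i))
        ((univ : Finset (Fin n)).filter (fun x => x < i))
      have hU : F.filter (fun x => x ≤ i) ∪ (univ : Finset (Fin n)).filter (fun x => x < i)
          = (univ : Finset (Fin n)).filter (fun x => x ≤ i) := by
        ext x
        simp only [Finset.mem_union, Finset.mem_filter, Finset.mem_univ, true_and]
        constructor
        · rintro (⟨_, hx⟩ | hx)
          · exact hx
          · exact le_of_lt hx
        · intro hx
          rcases lt_or_eq_of_le hx with hlt | heq
          · exact Or.inr hlt
          · exact Or.inl ⟨heq ▸ hiF, hx⟩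
      have hI : F.filter (fun x => x ≤ i) ∩ (univ : Finset (Fin n)).filter (fun x => x < i)
          = F.filter (fun x => x < i) := by
        ext x
        simp only [Finset.mem_inter, Finset.mem_filter, Finset.mem_univ, true_and]
        constructor
        · rintro ⟨⟨hxF, _⟩, hx⟩; exact ⟨hxF, hx⟩
        · rintro ⟨hxF, hx⟩; exact ⟨⟨hxF, le_of_lt hx⟩, hx⟩
      rw [hU, hI] at hsub'
      simp only [hc']; linarith
    have hdnn : ∀ F : Finset (Fin n), ∀ i : Fin n,
        0 ≤ h (F.filter (fun x => x ≤ i)) - h (F.filter (fun x => x < i)) := by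
      intro F i
      have := hmono _ _ (hfsub F i); linarith
    have htel : h (univ : Finset (Fin n)) = ∑ i : Fin n, c i := by
      rw [← telescope_aux h h0 univ]
    calc h (univ : Finset (Fin n)) = ∑ i : Fin n, c i := htel
      _ ≤ ∑ i : Fin n, (∑ F ∈ E.filter (fun F => i ∈ F), δ F) * c i := by
          apply Finset.sum_le_sum
          intro i _
          nth_rewrite 1 [← one_mul (c i)]
          exact mul_le_mul_of_nonneg_right (hc i) (hcnn i)
      _ = ∑ i : Fin n, ∑ F ∈ E.filter (fun F => i ∈ F), δ F * c i := by
          simp_rw [Finset.sum_mul]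
      _ = ∑ i : Fin n, ∑ F ∈ E, if i ∈ F then δ F * c i else 0 := by
          simp_rw [Finset.sum_filter]
      _ = ∑ F ∈ E, ∑ i : Fin n, if i ∈ F then δ F * c i else 0 := Finset.sum_comm
      _ ≤ ∑ F ∈ E, δ F * h F := by
          apply Finset.sum_le_sum
          intro F hF
          rw [← telescope_aux h h0 F, Finset.mul_sum]
          apply Finset.sum_le_sum
          intro i _
          by_cases hiF : i ∈ F
          · simp only [hiF, if_true]
            exact mul_le_mul_of_nonneg_left (hstep F i hiF) (hδ F hF)
          · simp only [hiF, if_false]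
            exact mul_nonneg (hδ F hF) (hdnn F i)
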